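/- For a closed Hermitian operator A and δ, ε ≥ 0, one has the inclusion F(A+δ, ε) ⊆ F(A, δ+ε). -/

import Mathlib

open InnerProductSpace RCLike Filter Topology MeasureTheory Set

variable {𝕜 E : Type*} [RCLike 𝕜] [NormedAddCommGroup E] [InnerProductSpace 𝕜 E]

local notation "⟪" x ", " y "⟫" => @inner 𝕜 _ _ x y

/-- `PowRel A n x y` means `x ∈ D(Aⁿ)` and `Aⁿ x = y`. -/
inductive PowRel (A : E →ₗ.[𝕜] E) : ℕ → E → E → Prop
  | zero (x : E) : PowRel A 0 x x
  | succ {n : ℕ} {x y : E} (h : PowRel A n x y) (hy : y ∈ A.domain) :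
      PowRel A (n + 1) x (A ⟨y, hy⟩)

/-- `F(A,λ)` for an unbounded operator. -/
def Fset (A : E →ₗ.[𝕜] E) (lam : ℝ) : Set E :=
  {x | ∀ n : ℕ, ∃ y : E, PowRel A n x y ∧ ‖y‖ ≤ lam ^ n * ‖x‖}

/-- orthogonal complement of a set -/
def ocompl (𝕜' : Type*) {E' : Type*} [RCLike 𝕜'] [NormedAddCommGroup E']
    [InnerProductSpace 𝕜' E'] (S : Set E') : Set E' :=
  {y | ∀ x ∈ S, (inner 𝕜' x y : 𝕜') = 0}

/-- Hermitian (symmetric) partially defined operator. -/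
def IsHermitianPMap (A : E →ₗ.[𝕜] E) : Prop :=
  ∀ x y : A.domain, ⟪A x, (y : E)⟫ = ⟪(x : E), A y⟫

/-- Self-adjoint partially defined operator (densely defined, symmetric, maximal). -/
def IsSelfAdjointPMap (A : E →ₗ.[𝕜] E) : Prop :=
  Dense (A.domain : Set E) ∧ IsHermitianPMap A ∧
    ∀ y z : E, (∀ x : A.domain, ⟪A x, y⟫ = ⟪(x : E), z⟫) →
      ∃ hy : y ∈ A.domain, A ⟨y, hy⟩ = z

/-- `F(T,λ)` for a bounded operator. -/
def FsetB (T : E →L[𝕜] E) (lam : ℝ) : Set E :=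
  {x | ∀ n : ℕ, ‖(T ^ n) x‖ ≤ lam ^ n * ‖x‖}

/-- Spectral family (resolution of the identity). -/
def IsSpectralFamily (P : ℝ → (E →L[𝕜] E)) : Prop :=
  (∀ t, IsIdempotentElem (P t)) ∧
  (∀ t x y, ⟪P t x, y⟫ = ⟪x, P t y⟫) ∧
  (∀ s t : ℝ, s ≤ t → ∀ x, P t (P s x) = P s x) ∧
  (∀ t x, Tendsto (fun s => P s x) (𝓝[>] t) (𝓝 (P t x))) ∧
  (∀ x, Tendsto (fun t => P t x) atBot (𝓝 (0 : E))) ∧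
  (∀ x, Tendsto (fun t => P t x) atTop (𝓝 x))

open Classical in
/-- Lebesgue–Stieltjes measure of a monotone right-continuous function (junk value otherwise). -/
noncomputable def stMeasure (f : ℝ → ℝ) : Measure ℝ :=
  if h : Monotone f ∧ ∀ x, ContinuousWithinAt f (Ici x) x then
    StieltjesFunction.measure ⟨f, h.1, h.2⟩ else 0

/-- The operator `x ↦ A x + δ x` with domain `D(A)`. -/
noncomputable def shiftPMap (A : E →ₗ.[𝕜] E) (δ : ℝ) : E →ₗ.[𝕜] E :=
  ⟨A.domain, A.toFun + (δ : 𝕜) • A.domain.subtype⟩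

lemma powrel_unique {A : E →ₗ.[𝕜] E} : ∀ {n : ℕ} {x y : E}, PowRel A n x y →
    ∀ {y' : E}, PowRel A n x y' → y = y' := by
  intro n x y h
  induction h with
  | zero x => intro y' h'; cases h'; rfl
  | succ h hy ih =>
    intro y' h'
    cases h' with
    | succ h2 hy2 =>
      have e := ih h2
      subst e
      rfl

lemma powrel_succ_elim {A : E →ₗ.[𝕜] E} {n : ℕ} {x z : E} (h : PowRel A (n + 1) x z) :
    ∃ (y : E) (hy : y ∈ A.domain), PowRel A n x y ∧ A ⟨y, hy⟩ = z := by
  cases h with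
  | succ h hy => exact ⟨_, hy, h, rfl⟩

/-- auxiliary double sequence: `uAux δ y n k` plays the role of `Aⁿ Bᵏ x`. -/
noncomputable def uAux (δ : ℝ) (y : ℕ → E) : ℕ → ℕ → E
  | 0, k => y k
  | n + 1, k => uAux δ y n (k + 1) - (δ : 𝕜) • uAux δ y n k

theorem stmt2 (A : E →ₗ.[𝕜] E) (hA : A.IsClosed) (hH : IsHermitianPMap A)
    (δ ε : ℝ) (hδ : 0 ≤ δ) (hε : 0 ≤ ε) :
    Fset (shiftPMap A δ) ε ⊆ Fset A (δ + ε) := by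
  intro x hx
  set B := shiftPMap A δ with hB
  choose y hyP hyB using hx
  have hy0 : y 0 = x := powrel_unique (hyP 0) (PowRel.zero x)
  -- each `y k` is in the domain
  have ydom : ∀ k, y k ∈ A.domain := by
    intro k
    obtain ⟨y', hy', h', -⟩ := powrel_succ_elim (hyP (k + 1))
    have e := powrel_unique (hyP k) h'
    rw [e]
    exact hy'
  -- the recurrence `A (y k) = y (k+1) - δ • y k`
  have yrec : ∀ k, A ⟨y k, ydom k⟩ = y (k + 1) - (δ : 𝕜) • y k := by
    intro k
    obtain ⟨y', hy', h', he⟩ := powrel_succ_elim (hyP (k + 1))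
    have e := powrel_unique (hyP k) h'
    subst e
    have hBe : B ⟨y k, hy'⟩ = A ⟨y k, ydom k⟩ + (δ : 𝕜) • y k := rfl
    rw [← he, hBe]
    abel
  -- domain membership for `uAux`
  have udom : ∀ n k, uAux (𝕜 := 𝕜) δ y n k ∈ A.domain := by
    intro n
    induction n with
    | zero => exact ydom
    | succ n ih =>
      intro k
      exact sub_mem (ih (k + 1)) (Submodule.smul_mem _ _ (ih k))
  -- `A` maps `uAux n k` to `uAux (n+1) k`
  have uA : ∀ n k, A ⟨uAux (𝕜 := 𝕜) δ y n k, udom n k⟩ = uAux (𝕜 := 𝕜) δ y (n + 1) k := by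
    intro n
    induction n with
    | zero => intro k; exact yrec k
    | succ n ih =>
      intro k
      have hsub : (⟨uAux (𝕜 := 𝕜) δ y (n + 1) k, udom (n + 1) k⟩ : A.domain) =
          ⟨uAux (𝕜 := 𝕜) δ y n (k + 1), udom n (k + 1)⟩ -
            (δ : 𝕜) • ⟨uAux (𝕜 := 𝕜) δ y n k, udom n k⟩ := rfl
      rw [hsub, A.map_sub, A.map_smul, ih (k + 1), ih k]
      rfl
  -- norm bound
  have ubound : ∀ n k, ‖uAux (𝕜 := 𝕜) δ y n k‖ ≤ (δ + ε) ^ n * ε ^ k * ‖x‖ := by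
    intro n
    induction n with
    | zero => intro k; simpa [uAux] using hyB k
    | succ n ih =>
      intro k
      have h1 := ih (k + 1)
      have h2 := ih k
      have hn : ‖uAux (𝕜 := 𝕜) δ y (n + 1) k‖ ≤
          ‖uAux (𝕜 := 𝕜) δ y n (k + 1)‖ + δ * ‖uAux (𝕜 := 𝕜) δ y n k‖ := by
        calc ‖uAux (𝕜 := 𝕜) δ y (n + 1) k‖
            ≤ ‖uAux (𝕜 := 𝕜) δ y n (k + 1)‖ + ‖(δ : 𝕜) • uAux (𝕜 := 𝕜) δ y n k‖ :=
              norm_sub_le _ _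
          _ = ‖uAux (𝕜 := 𝕜) δ y n (k + 1)‖ + δ * ‖uAux (𝕜 := 𝕜) δ y n k‖ := by
              rw [norm_smul, RCLike.norm_ofReal, abs_of_nonneg hδ]
      have key : (δ + ε) ^ n * ε ^ (k + 1) * ‖x‖ + δ * ((δ + ε) ^ n * ε ^ k * ‖x‖) =
          (δ + ε) ^ (n + 1) * ε ^ k * ‖x‖ := by ring
      calc ‖uAux (𝕜 := 𝕜) δ y (n + 1) k‖
          ≤ ‖uAux (𝕜 := 𝕜) δ y n (k + 1)‖ + δ * ‖uAux (𝕜 := 𝕜) δ y n k‖ := hn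
        _ ≤ (δ + ε) ^ n * ε ^ (k + 1) * ‖x‖ + δ * ((δ + ε) ^ n * ε ^ k * ‖x‖) := by
            have := mul_le_mul_of_nonneg_left h2 hδ
            linarith
        _ = (δ + ε) ^ (n + 1) * ε ^ k * ‖x‖ := key
  -- the power relation for `A`
  have uPow : ∀ n, PowRel A n x (uAux (𝕜 := 𝕜) δ y n 0) := by
    intro n
    induction n with
    | zero => show PowRel A 0 x (y 0); rw [hy0]; exact PowRel.zero x
    | succ n ih =>
      have := PowRel.succ ih (udom n 0)
      rwa [uA n 0] at this
  intro n
  exact ⟨uAux (𝕜 := 𝕜) δ y n 0, uPow n, by simpa using ubound n 0⟩
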